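/- If M > 1 is a product of primes each congruent to 1 modulo 4, then there exist integers p and q with p even, q odd, gcd(p, q) = 1, and M = p² + q². -/

import Mathlib

/-- If a prime `q` divides both `c*p` and `d*p` with `c, d` coprime, then `q = p`. -/
lemma aux_prime_eq (q p : ℕ) (hq : q.Prime) (hp : p.Prime) {c d : ℤ}
    (hcd : IsCoprime c d) (h1 : (q : ℤ) ∣ c * p) (h2 : (q : ℤ) ∣ d * p) : q = p := by
  have hqz : Prime (q : ℤ) := Nat.prime_iff_prime_int.mp hq
  rcases hqz.dvd_mul.mp h1 with hc | hpq
  · rcases hqz.dvd_mul.mp h2 with hd | hpq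
    · exact absurd (hcd.isUnit_of_dvd' hc hd) hqz.not_unit
    · exact (Nat.prime_dvd_prime_iff_eq hq hp).mp (Int.natCast_dvd_natCast.mp hpq)
  · exact (Nat.prime_dvd_prime_iff_eq hq hp).mp (Int.natCast_dvd_natCast.mp hpq)

/-- An odd prime cannot divide all of `2*A*c`, `2*B*d`, `2*A*d`, `2*B*c`
when `(A,B)` and `(c,d)` are coprime pairs. -/
lemma aux_not_both (p : ℕ) (hp : p.Prime) (hp2 : p ≠ 2) {A B c d : ℤ}
    (hAB : IsCoprime A B) (hcd : IsCoprime c d)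
    (h1 : (p : ℤ) ∣ 2 * (A * c)) (h2 : (p : ℤ) ∣ 2 * (B * d))
    (h3 : (p : ℤ) ∣ 2 * (A * d)) (h4 : (p : ℤ) ∣ 2 * (B * c)) : False := by
  have hpz : Prime (p : ℤ) := Nat.prime_iff_prime_int.mp hp
  have hnot2 : ¬ (p : ℤ) ∣ 2 := by
    intro hdvd
    have hd : p ∣ 2 := Int.natCast_dvd_natCast.mp (by exact_mod_cast hdvd)
    have := Nat.le_of_dvd (by norm_num) hd
    have := hp.two_le
    omega
  have h1' : (p : ℤ) ∣ A * c := (hpz.dvd_mul.mp h1).resolve_left hnot2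
  have h2' : (p : ℤ) ∣ B * d := (hpz.dvd_mul.mp h2).resolve_left hnot2
  have h3' : (p : ℤ) ∣ A * d := (hpz.dvd_mul.mp h3).resolve_left hnot2
  have h4' : (p : ℤ) ∣ B * c := (hpz.dvd_mul.mp h4).resolve_left hnot2
  rcases hpz.dvd_mul.mp h1' with hA | hc
  · rcases hpz.dvd_mul.mp h2' with hB | hd
    · exact hpz.not_unit (hAB.isUnit_of_dvd' hA hB)
    · rcases hpz.dvd_mul.mp h4' with hB | hc
      · exact hpz.not_unit (hAB.isUnit_of_dvd' hA hB)
      · exact hpz.not_unit (hcd.isUnit_of_dvd' hc hd)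
  · rcases hpz.dvd_mul.mp h3' with hA | hd
    · rcases hpz.dvd_mul.mp h2' with hB | hd
      · exact hpz.not_unit (hAB.isUnit_of_dvd' hA hB)
      · exact hpz.not_unit (hcd.isUnit_of_dvd' hc hd)
    · exact hpz.not_unit (hcd.isUnit_of_dvd' hc hd)

/-- Extract a common prime factor from a non-coprime pair, not both zero. -/
lemma aux_common_prime {x y : ℤ} (hne : ¬ (x = 0 ∧ y = 0)) (hnc : ¬ IsCoprime x y) :
    ∃ q : ℕ, q.Prime ∧ (q : ℤ) ∣ x ∧ (q : ℤ) ∣ y := by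
  have hg : Int.gcd x y ≠ 1 := fun hgg => hnc (Int.isCoprime_iff_gcd_eq_one.mpr hgg)
  have hg0 : Int.gcd x y ≠ 0 := by
    intro h0
    exact hne ⟨(Int.gcd_eq_zero_iff.mp h0).1, (Int.gcd_eq_zero_iff.mp h0).2⟩
  obtain ⟨q, hq, hqd⟩ := Nat.exists_prime_and_dvd hg
  refine ⟨q, hq, ?_, ?_⟩
  · exact dvd_trans (Int.natCast_dvd_natCast.mpr hqd) (Int.gcd_dvd_left x y)
  · exact dvd_trans (Int.natCast_dvd_natCast.mpr hqd) (Int.gcd_dvd_right x y)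

/-- Main induction: primitive representation as a sum of two squares. -/
lemma aux_main : ∀ M : ℕ, 1 < M → (∀ p : ℕ, p.Prime → p ∣ M → p % 4 = 1) →
    ∃ u v : ℤ, IsCoprime u v ∧ (M : ℤ) = u ^ 2 + v ^ 2 := by
  intro M
  induction M using Nat.strong_induction_on with
  | _ M ih =>
    intro hM h
    obtain ⟨p, hp, hpM⟩ := Nat.exists_prime_and_dvd (by omega : M ≠ 1)
    have hp4 : p % 4 = 1 := h p hp hpM
    haveI : Fact p.Prime := ⟨hp⟩
    obtain ⟨a, b, hab⟩ := Nat.Prime.sq_add_sq (p := p) (by omega)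
    -- coprimality of a, b
    have habcop : Nat.Coprime a b := by
      by_contra hc
      obtain ⟨q, hq, hqa, hqb⟩ := Nat.Prime.not_coprime_iff_dvd.mp hc
      have hq2 : q ^ 2 ∣ p := hab ▸ dvd_add (pow_dvd_pow_of_dvd hqa 2) (pow_dvd_pow_of_dvd hqb 2)
      have hqp : q ∣ p := (dvd_pow_self q two_ne_zero).trans hq2
      have : q = p := (Nat.prime_dvd_prime_iff_eq hq hp).mp hqp
      subst this
      have := Nat.le_of_dvd hp.pos hq2
      nlinarith [hp.two_le]
    obtain ⟨N, hMN⟩ := hpM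
    have hN0 : N ≠ 0 := by rintro rfl; omega
    rcases eq_or_lt_of_le (Nat.one_le_iff_ne_zero.mpr hN0) with hN1 | hN1
    · -- M = p
      refine ⟨(a : ℤ), (b : ℤ), habcop.isCoprime, ?_⟩
      have hMp : M = p := by rw [hMN, ← hN1, mul_one]
      exact_mod_cast (hMp.trans hab.symm)
    · -- N > 1, use induction
      have hNM : N < M := by
        have := hp.two_le
        calc N < 2 * N := by omega
        _ ≤ p * N := Nat.mul_le_mul_right N hp.two_le
        _ = M := hMN.symm
      obtain ⟨c, d, hcd, hNcd⟩ := ih N hNM hN1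
        (fun q hq hqN => h q hq (hMN ▸ dvd_mul_of_dvd_right hqN p))
      set A : ℤ := (a : ℤ) with hA
      set B : ℤ := (b : ℤ) with hB
      have hABcop : IsCoprime A B := habcop.isCoprime
      have hpint : (p : ℤ) = A ^ 2 + B ^ 2 := by rw [hA, hB]; exact_mod_cast hab.symm
      have hMint : (M : ℤ) = (p : ℤ) * (N : ℤ) := by exact_mod_cast hMN
      have hMuv : (M : ℤ) = (A * c + B * d) ^ 2 + (A * d - B * c) ^ 2 := by
        rw [hMint, hpint, hNcd]; ring
      have hMuv' : (M : ℤ) = (A * c - B * d) ^ 2 + (A * d + B * c) ^ 2 := by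
        rw [hMint, hpint, hNcd]; ring
      have hMne : (M : ℤ) ≠ 0 := by exact_mod_cast (by omega : M ≠ 0)
      -- one of the two pairs is coprime
      by_cases hcop1 : IsCoprime (A * c + B * d) (A * d - B * c)
      · exact ⟨_, _, hcop1, hMuv⟩
      by_cases hcop2 : IsCoprime (A * c - B * d) (A * d + B * c)
      · exact ⟨_, _, hcop2, hMuv'⟩
      exfalso
      have hne1 : ¬ (A * c + B * d = 0 ∧ A * d - B * c = 0) := by
        rintro ⟨e1, e2⟩
        apply hMne
        rw [hMuv, e1, e2]; ring
      have hne2 : ¬ (A * c - B * d = 0 ∧ A * d + B * c = 0) := by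
        rintro ⟨e1, e2⟩
        apply hMne
        rw [hMuv', e1, e2]; ring
      obtain ⟨q, hq, hqu, hqv⟩ := aux_common_prime hne1 hcop1
      obtain ⟨q', hq', hqu', hqv'⟩ := aux_common_prime hne2 hcop2
      -- q = p
      have hq_eq : q = p := by
        apply aux_prime_eq q p hq hp hcd
        · have : c * (p : ℤ) = A * (A * c + B * d) - B * (A * d - B * c) := by
            rw [hpint]; ring
          rw [this]; exact dvd_sub (hqu.mul_left A) (hqv.mul_left B)
        · have : d * (p : ℤ) = B * (A * c + B * d) + A * (A * d - B * c) := by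
            rw [hpint]; ring
          rw [this]; exact dvd_add (hqu.mul_left B) (hqv.mul_left A)
      have hq'_eq : q' = p := by
        apply aux_prime_eq q' p hq' hp hcd
        · have : c * (p : ℤ) = A * (A * c - B * d) + B * (A * d + B * c) := by
            rw [hpint]; ring
          rw [this]; exact dvd_add (hqu'.mul_left A) (hqv'.mul_left B)
        · have : d * (p : ℤ) = A * (A * d + B * c) - B * (A * c - B * d) := by
            rw [hpint]; ring
          rw [this]; exact dvd_sub (hqv'.mul_left A) (hqu'.mul_left B)
      rw [hq_eq] at hqu hqv
      rw [hq'_eq] at hqu' hqv'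
      -- p divides all four, contradiction
      refine aux_not_both p hp (by omega) hABcop hcd ?_ ?_ ?_ ?_
      · have : 2 * (A * c) = (A * c + B * d) + (A * c - B * d) := by ring
        rw [this]; exact dvd_add hqu hqu'
      · have : 2 * (B * d) = (A * c + B * d) - (A * c - B * d) := by ring
        rw [this]; exact dvd_sub hqu hqu'
      · have : 2 * (A * d) = (A * d - B * c) + (A * d + B * c) := by ring
        rw [this]; exact dvd_add hqv hqv'
      · have : 2 * (B * c) = (A * d + B * c) - (A * d - B * c) := by ring
        rw [this]; exact dvd_sub hqv' hqv

theorem stmt19 (M : ℕ) (hM : 1 < M)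
    (h : ∀ p : ℕ, p.Prime → p ∣ M → p % 4 = 1) :
    ∃ p q : ℤ, Even p ∧ Odd q ∧ IsCoprime p q ∧ (M : ℤ) = p ^ 2 + q ^ 2 := by
  obtain ⟨u, v, hcop, hsum⟩ := aux_main M hM h
  have hModd : Odd (M : ℤ) := by
    rw [Int.odd_coe_nat]
    rw [Nat.odd_iff]
    by_contra hc
    have h2 : 2 ∣ M := by omega
    have := h 2 Nat.prime_two h2
    omega
  rw [hsum] at hModd
  rcases Int.even_or_odd u with hu | hu
  · rcases Int.even_or_odd v with hv | hv
    · exfalso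
      have hu2 : Even (u ^ 2) := by simpa [sq] using hu.mul_right u
      have hv2 : Even (v ^ 2) := by simpa [sq] using hv.mul_right v
      exact (Int.not_odd_iff_even.mpr (hu2.add hv2)) hModd
    · exact ⟨u, v, hu, hv, hcop, hsum⟩
  · rcases Int.even_or_odd v with hv | hv
    · exact ⟨v, u, hv, hu, hcop.symm, by rw [hsum]; ring⟩
    · exfalso
      exact (Int.not_odd_iff_even.mpr ((hu.pow).add_odd (hv.pow))) hModd
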